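/- Suppose a learning algorithm L uses a model r = f(B, C w) with f : P × ℝ^m → ℝ, and parameters are determined from a data set D = {(wᵢ, rᵢ)}ᵢ₌₁ⁿ as the unique global minimizer of the regularized objective F(B, C) = 𝓛(f(B, C w₁), …, f(B, C wₙ), r₁, …, rₙ) + λ(𝓡₁(B) + ∑ᵢ∑ⱼ |Cᵢⱼ|), with λ > 0 (L¹ regularization). Then for any permutation matrix T, if the corresponding objective for the transformed data set τ(D) = {(T wᵢ, rᵢ)} also has a unique global minimizer, the algorithm is invariant to τ(w) = T w: L(τ(D), τ(w)) = L(D, w) for all w ∈ ℝ^d. -/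

import Mathlib

/-- Invariance of a learning algorithm of model form `f(B, C w)` trained by exact
minimization of the `L¹`-regularized objective
`F(B,C) = 𝓛(f(B, C w₁), …, f(B, C wₙ), r₁, …, rₙ) + λ (𝓡₁(B) + ∑ᵢ∑ⱼ |Cᵢⱼ|)`, `λ > 0`.
If `(Bhat, Chat)` is the unique global minimizer of `F` for the data set `D = {(wᵢ, rᵢ)}`
and `(Bhat', Chat')` is the unique global minimizer of the corresponding objective for the
transformed data set `τ(D) = {(T wᵢ, rᵢ)}` with `T` a permutation matrix (the matrix of a
permutation `σ`), then for every input `w`, `L(τ(D), τ(w)) = L(D, w)`, i.e.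
`f(Bhat', Chat' (T w)) = f(Bhat, Chat w)`. -/
theorem invariance_L1_regularization {P : Type*} {m d n : ℕ}
    (f : P → (Fin m → ℝ) → ℝ)
    (𝓛 : (Fin n → ℝ) → (Fin n → ℝ) → ℝ)
    (𝓡₁ : P → ℝ) (lam : ℝ) (hlam : 0 < lam)
    (w : Fin n → (Fin d → ℝ)) (r : Fin n → ℝ)
    (T : Matrix (Fin d) (Fin d) ℝ)
    (σ : Equiv.Perm (Fin d)) (hT : ∀ i j, T i j = if σ i = j then (1 : ℝ) else 0)
    (Bhat : P) (Chat : Matrix (Fin m) (Fin d) ℝ)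
    (Bhat' : P) (Chat' : Matrix (Fin m) (Fin d) ℝ)
    -- (Bhat, Chat) uniquely globally minimizes the regularized objective for D
    (hmin : ∀ (B : P) (C : Matrix (Fin m) (Fin d) ℝ),
      𝓛 (fun i => f Bhat (Chat.mulVec (w i))) r + lam * (𝓡₁ Bhat + ∑ i, ∑ j, |Chat i j|) ≤
        𝓛 (fun i => f B (C.mulVec (w i))) r + lam * (𝓡₁ B + ∑ i, ∑ j, |C i j|))
    (huniq : ∀ (B : P) (C : Matrix (Fin m) (Fin d) ℝ),
      𝓛 (fun i => f B (C.mulVec (w i))) r + lam * (𝓡₁ B + ∑ i, ∑ j, |C i j|) =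
          𝓛 (fun i => f Bhat (Chat.mulVec (w i))) r +
            lam * (𝓡₁ Bhat + ∑ i, ∑ j, |Chat i j|) →
        B = Bhat ∧ C = Chat)
    -- (Bhat', Chat') uniquely globally minimizes the regularized objective for τ(D)
    (hmin' : ∀ (B : P) (C : Matrix (Fin m) (Fin d) ℝ),
      𝓛 (fun i => f Bhat' (Chat'.mulVec (T.mulVec (w i)))) r +
          lam * (𝓡₁ Bhat' + ∑ i, ∑ j, |Chat' i j|) ≤
        𝓛 (fun i => f B (C.mulVec (T.mulVec (w i)))) r +
          lam * (𝓡₁ B + ∑ i, ∑ j, |C i j|))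
    (huniq' : ∀ (B : P) (C : Matrix (Fin m) (Fin d) ℝ),
      𝓛 (fun i => f B (C.mulVec (T.mulVec (w i)))) r +
          lam * (𝓡₁ B + ∑ i, ∑ j, |C i j|) =
        𝓛 (fun i => f Bhat' (Chat'.mulVec (T.mulVec (w i)))) r +
          lam * (𝓡₁ Bhat' + ∑ i, ∑ j, |Chat' i j|) →
        B = Bhat' ∧ C = Chat') :
    ∀ v : Fin d → ℝ, f Bhat' (Chat'.mulVec (T.mulVec v)) = f Bhat (Chat.mulVec v) := by

  -- Let T' be the matrix of σ⁻¹
  set T' : Matrix (Fin d) (Fin d) ℝ :=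
    fun i j => if σ.symm i = j then (1 : ℝ) else 0 with hT'
  have hmulT : ∀ (C : Matrix (Fin m) (Fin d) ℝ) i j, (C * T) i j = C i (σ.symm j) := by
    intro C i j
    simp only [Matrix.mul_apply, hT]
    rw [Finset.sum_eq_single (σ.symm j)]
    · simp
    · intro k _ hk
      have : σ k ≠ j := fun h => hk (by simp [← h])
      simp [this]
    · simp
  have habs : ∀ (C : Matrix (Fin m) (Fin d) ℝ),
      (∑ i, ∑ j, |(C * T) i j|) = ∑ i, ∑ j, |C i j| := by
    intro C
    refine Finset.sum_congr rfl fun i _ => ?_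
    calc ∑ j, |(C * T) i j| = ∑ j, |C i (σ.symm j)| := by
          refine Finset.sum_congr rfl fun j _ => by rw [hmulT]
      _ = ∑ j, |C i j| := Equiv.sum_comp σ.symm (fun j => |C i j|)
  have hmulT' : ∀ (C : Matrix (Fin m) (Fin d) ℝ) i j, (C * T') i j = C i (σ j) := by
    intro C i j
    rw [Matrix.mul_apply]; simp only [hT']
    rw [Finset.sum_eq_single (σ j)]
    · simp
    · intro k _ hk
      have : σ.symm k ≠ j := fun h => hk (by simp [← h])
      simp [this]
    · simp
  have habs' : ∀ (C : Matrix (Fin m) (Fin d) ℝ),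
      (∑ i, ∑ j, |(C * T') i j|) = ∑ i, ∑ j, |C i j| := by
    intro C
    refine Finset.sum_congr rfl fun i _ => ?_
    calc ∑ j, |(C * T') i j| = ∑ j, |C i (σ j)| := by
          refine Finset.sum_congr rfl fun j _ => by rw [hmulT']
      _ = ∑ j, |C i j| := Equiv.sum_comp σ (fun j => |C i j|)
  have hT'T : T' * T = 1 := by
    ext i j
    rw [Matrix.mul_apply]; simp only [hT, hT', Matrix.one_apply]
    rw [Finset.sum_eq_single (σ.symm i)]
    · simp [Equiv.apply_symm_apply, eq_comm]
    · intro k _ hk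
      rw [if_neg (fun h => hk h.symm), zero_mul]
    · simp
  have hCT'T : ∀ (C : Matrix (Fin m) (Fin d) ℝ), C * T' * T = C := by
    intro C; rw [Matrix.mul_assoc, hT'T, Matrix.mul_one]
  have hmv : ∀ (C : Matrix (Fin m) (Fin d) ℝ) (v : Fin d → ℝ),
      C.mulVec (T.mulVec v) = (C * T).mulVec v := by
    intro C v; rw [Matrix.mulVec_mulVec]
  -- F(Bhat', Chat' * T) ≤ F(B, C) for all B, C
  have key : ∀ (B : P) (C : Matrix (Fin m) (Fin d) ℝ),
      𝓛 (fun i => f Bhat' ((Chat' * T).mulVec (w i))) r +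
          lam * (𝓡₁ Bhat' + ∑ i, ∑ j, |(Chat' * T) i j|) ≤
        𝓛 (fun i => f B (C.mulVec (w i))) r + lam * (𝓡₁ B + ∑ i, ∑ j, |C i j|) := by
    intro B C
    have h1 := hmin' B (C * T')
    simp only [hmv, hCT'T, habs, habs'] at h1 ⊢
    exact h1
  have heq :
      𝓛 (fun i => f Bhat' ((Chat' * T).mulVec (w i))) r +
          lam * (𝓡₁ Bhat' + ∑ i, ∑ j, |(Chat' * T) i j|) =
        𝓛 (fun i => f Bhat (Chat.mulVec (w i))) r +
          lam * (𝓡₁ Bhat + ∑ i, ∑ j, |Chat i j|) :=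
    le_antisymm (key Bhat Chat) (hmin Bhat' (Chat' * T))
  obtain ⟨hB, hC⟩ := huniq Bhat' (Chat' * T) heq
  intro v
  rw [hmv, hC, hB]
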